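/- Morphisms of schemes of finite expansion are stable under base change: if f : Y → X is a morphism of schemes of finite expansion and g : X' → X is any morphism of schemes, then the base change f' : X' ×_X Y → X' is of finite expansion. -/

import Mathlib

universe u

open AlgebraicGeometry CategoryTheory CategoryTheory.Limits

namespace FiniteExpansionAux

lemma map_toSpecMvPoly (n : Type u) {S T : AlgebraicGeometry.Scheme.{u}} (f : S ⟶ T) :
    AffineSpace.map n f ≫ AffineSpace.toSpecMvPoly n T = AffineSpace.toSpecMvPoly n S := by
  apply (AffineSpace.toSpecMvPolyIntEquiv n).injective
  funext i
  rw [AffineSpace.toSpecMvPolyIntEquiv_comp]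
  exact AffineSpace.map_appTop_coord f i

lemma isPullback_affineSpace_map (n : Type u) {S T : AlgebraicGeometry.Scheme.{u}} (f : S ⟶ T) :
    IsPullback (AffineSpace.map n f) (AffineSpace n S ↘ S) (AffineSpace n T ↘ T) f := by
  have hT : IsPullback (AffineSpace.toSpecMvPoly n T) (AffineSpace n T ↘ T)
      (terminal.from _) (terminal.from T) := by
    rw [AffineSpace.over_over]
    exact (IsPullback.of_hasPullback _ _).flip
  have hS : IsPullback (AffineSpace.toSpecMvPoly n S) (AffineSpace n S ↘ S)
      (terminal.from _) (terminal.from S) := by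
    rw [AffineSpace.over_over]
    exact (IsPullback.of_hasPullback _ _).flip
  refine IsPullback.of_right ?_ (AffineSpace.map_over f) hT
  rw [map_toSpecMvPoly, terminal.comp_from]
  exact hS

end FiniteExpansionAux

/-- A morphism of schemes `f : Y ⟶ X` is of finite expansion if `X` can be covered by open
subschemes `U i` and `Y` can be covered by open subschemes `V j` such that each restriction
`f|_{V j}` factors as `V j ⟶ 𝔸ⁿ_{U i} ⟶ U i ⟶ X` for some `i` and some `n`, where
`V j ⟶ 𝔸ⁿ_{U i}` is integral and `U i ⟶ X` is the open immersion. -/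
def IsFiniteExpansion {Y X : AlgebraicGeometry.Scheme.{u}} (f : Y ⟶ X) : Prop :=
  ∃ (ι : Type u) (U : ι → X.Opens) (κ : Type u) (V : κ → Y.Opens),
    iSup U = ⊤ ∧ iSup V = ⊤ ∧
    ∀ j : κ, ∃ (i : ι) (n : ℕ)
      (t : ((V j : AlgebraicGeometry.Scheme) ⟶ AffineSpace (ULift.{u} (Fin n)) (U i : AlgebraicGeometry.Scheme))),
      IsIntegralHom t ∧
        t ≫ (AffineSpace (ULift.{u} (Fin n)) (U i : AlgebraicGeometry.Scheme) ↘
            (U i : AlgebraicGeometry.Scheme)) ≫ (U i).ι = (V j).ι ≫ f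

/-- Morphisms of schemes of finite expansion are stable under base change:
if `f : Y ⟶ X` is of finite expansion and `g : X' ⟶ X` is any morphism, then the base change
`X' ×ₓ Y ⟶ X'` is of finite expansion. -/
theorem IsFiniteExpansion.baseChange {Y X X' : AlgebraicGeometry.Scheme.{u}}
    (f : Y ⟶ X) (g : X' ⟶ X) (hf : IsFiniteExpansion f) :
    IsFiniteExpansion (pullback.fst g f) := by
  obtain ⟨ι, U, κ, V, hU, hV, H⟩ := hf
  refine ⟨ι, fun i => g ⁻¹ᵁ U i, κ, fun j => pullback.snd g f ⁻¹ᵁ V j, ?_, ?_, ?_⟩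
  · rw [eq_top_iff]
    intro x _
    have hx : (g.base x : X) ∈ iSup U := by rw [hU]; trivial
    obtain ⟨i, hi⟩ := TopologicalSpace.Opens.mem_iSup.mp hx
    exact TopologicalSpace.Opens.mem_iSup.mpr ⟨i, hi⟩
  · rw [eq_top_iff]
    intro x _
    have hx : ((pullback.snd g f).base x : Y) ∈ iSup V := by rw [hV]; trivial
    obtain ⟨j, hj⟩ := TopologicalSpace.Opens.mem_iSup.mp hx
    exact TopologicalSpace.Opens.mem_iSup.mpr ⟨j, hj⟩
  · intro j
    obtain ⟨i, n, t, ht, hcomm⟩ := H j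
    have hbig : IsPullback (pullback.fst g f) (pullback.snd g f) g f :=
      IsPullback.of_hasPullback g f
    have hF := (isPullback_morphismRestrict (pullback.snd g f) (V j)).paste_vert hbig.flip
    have hE := (FiniteExpansionAux.isPullback_affineSpace_map (ULift.{u} (Fin n)) (g ∣_ U i)).paste_vert
      (isPullback_morphismRestrict g (U i))
    have hcomm' : t ≫ ((AffineSpace (ULift.{u} (Fin n)) (U i : AlgebraicGeometry.Scheme) ↘
        (U i : AlgebraicGeometry.Scheme)) ≫ (U i).ι) = (V j).ι ≫ f := by
      rw [← hcomm]
    have w : ((pullback.snd g f ∣_ V j) ≫ t) ≫ ((AffineSpace (ULift.{u} (Fin n))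
          ((U i : AlgebraicGeometry.Scheme)) ↘ (U i : AlgebraicGeometry.Scheme)) ≫ (U i).ι)
        = ((pullback.snd g f ⁻¹ᵁ V j).ι ≫ pullback.fst g f) ≫ g := by
      rw [Category.assoc, hcomm', ← Category.assoc]
      exact hF.w
    refine ⟨i, n, hE.lift ((pullback.snd g f ∣_ V j) ≫ t)
      ((pullback.snd g f ⁻¹ᵁ V j).ι ≫ pullback.fst g f) w, ?_, ?_⟩
    · have hG : IsPullback (pullback.snd g f ∣_ V j)
          (hE.lift ((pullback.snd g f ∣_ V j) ≫ t)
            ((pullback.snd g f ⁻¹ᵁ V j).ι ≫ pullback.fst g f) w) t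
          (AffineSpace.map (ULift.{u} (Fin n)) (g ∣_ U i)) := by
        refine IsPullback.of_bot ?_ (hE.lift_fst _ _ _).symm hE
        rw [hE.lift_snd, hcomm']
        exact hF
      exact MorphismProperty.of_isPullback hG ht
    · have := hE.lift_snd ((pullback.snd g f ∣_ V j) ≫ t)
        ((pullback.snd g f ⁻¹ᵁ V j).ι ≫ pullback.fst g f) w
      simpa only [Category.assoc] using this
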